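/- Let F be a field, n a natural number, and x_0, …, x_n nonzero elements of F, with X = diag(x_0, …, x_n). Then det(P_nᵀ · X + P̂_n) = (x_0 · x_1 ⋯ x_n) · det(Q_n + X⁻¹), where X⁻¹ = diag(1/x_0, …, 1/x_n). -/

import Mathlib

open Matrix

/-- The lower triangular Pascal matrix of size `n+1` over a field `F`. -/
def pascalL (F : Type*) [Field F] (n : ℕ) : Matrix (Fin (n+1)) (Fin (n+1)) F :=
  Matrix.of fun i j => (Nat.choose i.val j.val : F)

/-- The signed Pascal matrix, with entries `(-1)^(i+j) * choose i j` (the inverse of `P_n`). -/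
def pascalHat (F : Type*) [Field F] (n : ℕ) : Matrix (Fin (n+1)) (Fin (n+1)) F :=
  Matrix.of fun i j => (-1 : F) ^ (i.val + j.val) * (Nat.choose i.val j.val : F)

/-- The symmetric Pascal matrix, with entries `choose (i+j) j`. -/
def pascalQ (F : Type*) [Field F] (n : ℕ) : Matrix (Fin (n+1)) (Fin (n+1)) F :=
  Matrix.of fun i j => (Nat.choose (i.val + j.val) j.val : F)

open Finset

lemma alt_sum_F {F : Type*} [Field F] (m : ℕ) :
    (∑ k ∈ range (m+1), (-1:F)^k * (m.choose k : F)) = if m = 0 then 1 else 0 := by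
  have h := Int.alternating_sum_range_choose (n := m)
  have h2 : ((∑ k ∈ range (m+1), ((-1:ℤ)^k * (m.choose k : ℤ)) : ℤ) : F)
      = ∑ k ∈ range (m+1), (-1:F)^k * (m.choose k : F) := by
    push_cast
    refine Finset.sum_congr (by rw [Nat.add_comm]) fun k _ => ?_
    rfl
  rw [← h2, h]
  split <;> simp

lemma key_sum {F : Type*} [Field F] (i j : ℕ) (h : j ≤ i) :
    (∑ k ∈ Finset.Icc j i, (-1:F)^(k+j) * ((i.choose k : F) * (k.choose j : F)))
      = if i = j then 1 else 0 := by
  have hmap : Finset.Icc j i = (range (i - j + 1)).map (addLeftEmbedding j) := by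
    ext k
    simp only [Finset.mem_Icc, Finset.mem_map, Finset.mem_range, addLeftEmbedding,
      Function.Embedding.coeFn_mk, Nat.lt_succ_iff]
    constructor
    · rintro ⟨h1, h2⟩; exact ⟨k - j, by omega, by omega⟩
    · rintro ⟨a, ha, rfl⟩; omega
  rw [hmap, Finset.sum_map]
  have hcong : ∀ m ∈ range (i - j + 1),
      (-1:F)^(addLeftEmbedding j m + j) * ((i.choose (addLeftEmbedding j m) : F) * ((addLeftEmbedding j m).choose j : F))
      = (i.choose j : F) * ((-1:F)^m * ((i-j).choose m : F)) := by
    intro m hm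
    simp only [addLeftEmbedding, Function.Embedding.coeFn_mk] at *
    rw [mem_range] at hm
    have hc := Nat.choose_mul (n := i) (k := j + m) (s := j) (by omega)
    have hsign : (-1:F)^(j + m + j) = (-1:F)^m := by
      rw [show j + m + j = m + 2*j by ring, pow_add, pow_mul]; simp
    rw [hsign]
    have hcF : (i.choose (j+m) : F) * ((j+m).choose j : F) = (i.choose j : F) * ((i-j).choose m : F) := by
      rw [show j + m - j = m from by omega] at hc
      exact_mod_cast congrArg (Nat.cast : ℕ → F) hc
    rw [hcF]; ring
  rw [Finset.sum_congr rfl hcong, ← Finset.mul_sum, alt_sum_F]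
  rcases eq_or_ne i j with rfl | hne
  · simp
  · rw [if_neg (by omega), if_neg hne, mul_zero]

lemma pascalL_mul_pascalHat (F : Type*) [Field F] (n : ℕ) :
    pascalL F n * pascalHat F n = 1 := by
  ext i j
  simp only [Matrix.mul_apply, pascalL, pascalHat, Matrix.of_apply, Matrix.one_apply]
  rw [Fin.sum_univ_eq_sum_range (fun k => (Nat.choose i.val k : F) * ((-1:F)^(k + j.val) * (Nat.choose k j.val : F)))]
  rcases le_or_gt (j.val) (i.val) with hji | hji
  · have hsub : Finset.Icc j.val i.val ⊆ range (n+1) := by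
      intro k hk; simp only [Finset.mem_Icc, Finset.mem_range] at hk ⊢; omega
    rw [← Finset.sum_subset hsub (by
      intro k hk hk2
      simp only [Finset.mem_Icc] at hk2
      rcases le_or_gt k i.val with h1 | h1
      · have hz : Nat.choose k j.val = 0 := Nat.choose_eq_zero_of_lt (by omega)
        simp [hz]
      · have hz : Nat.choose i.val k = 0 := Nat.choose_eq_zero_of_lt h1
        simp [hz])]
    have hk := key_sum (F := F) i.val j.val hji
    rw [show (∑ k ∈ Finset.Icc j.val i.val, (Nat.choose i.val k : F) * ((-1:F)^(k + j.val) * (Nat.choose k j.val : F)))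
        = ∑ k ∈ Finset.Icc j.val i.val, (-1:F)^(k+j.val) * ((Nat.choose i.val k : F) * (Nat.choose k j.val : F)) from
      Finset.sum_congr rfl (fun k _ => by ring), hk]
    congr 1
    simp only [Fin.ext_iff, eq_iff_iff]
  · have h0 : ∀ k ∈ range (n+1), (Nat.choose i.val k : F) * ((-1:F)^(k + j.val) * (Nat.choose k j.val : F)) = 0 := by
      intro k _
      rcases le_or_gt k i.val with h1 | h1
      · have hz : Nat.choose k j.val = 0 := Nat.choose_eq_zero_of_lt (by omega)
        simp [hz]
      · have hz : Nat.choose i.val k = 0 := Nat.choose_eq_zero_of_lt h1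
        simp [hz]
    rw [Finset.sum_eq_zero h0, if_neg (by intro h; rw [h] at hji; omega)]

lemma pascalL_mul_transpose (F : Type*) [Field F] (n : ℕ) :
    pascalL F n * (pascalL F n)ᵀ = pascalQ F n := by
  ext i j
  simp only [Matrix.mul_apply, pascalL, pascalQ, Matrix.transpose_apply, Matrix.of_apply]
  rw [Fin.sum_univ_eq_sum_range (fun k => (Nat.choose i.val k : F) * (Nat.choose j.val k : F))]
  have hv := Nat.add_choose_eq i.val j.val j.val
  rw [Finset.Nat.sum_antidiagonal_eq_sum_range_succ (f := fun a b => Nat.choose i.val a * Nat.choose j.val b)] at hv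
  have hvF : (Nat.choose (i.val + j.val) j.val : F)
      = ∑ a ∈ range (j.val + 1), (Nat.choose i.val a : F) * (Nat.choose j.val (j.val - a) : F) := by
    exact_mod_cast congrArg (Nat.cast : ℕ → F) hv
  rw [hvF]
  have hsub : range (j.val + 1) ⊆ range (n+1) := by
    intro k hk; simp only [Finset.mem_range] at hk ⊢; omega
  rw [← Finset.sum_subset hsub (by
    intro k hk hk2
    simp only [Finset.mem_range] at hk2
    have hz : Nat.choose j.val k = 0 := Nat.choose_eq_zero_of_lt (by omega)
    simp [hz])]
  refine Finset.sum_congr rfl fun a ha => ?_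
  rw [mem_range] at ha
  rw [Nat.choose_symm (show a ≤ j.val by omega)]

lemma det_pascalL (F : Type*) [Field F] (n : ℕ) : (pascalL F n).det = 1 := by
  rw [Matrix.det_of_lowerTriangular (pascalL F n) (by
    intro i j hij
    simp only [OrderDual.toDual_lt_toDual] at hij
    simp [pascalL, Nat.choose_eq_zero_of_lt (show i.val < j.val from hij)])]
  simp [pascalL]

theorem det_pascal_diagonal_params (F : Type*) [Field F] (n : ℕ)
    (x : Fin (n+1) → F) (hx : ∀ i, x i ≠ 0) :
    ((pascalL F n)ᵀ * Matrix.diagonal x + pascalHat F n).det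
      = (∏ i, x i) * (pascalQ F n + Matrix.diagonal (fun i => (x i)⁻¹)).det := by
  have h1 : ((pascalL F n)ᵀ * Matrix.diagonal x + pascalHat F n).det
      = (pascalL F n * ((pascalL F n)ᵀ * Matrix.diagonal x + pascalHat F n)).det := by
    rw [Matrix.det_mul, det_pascalL, one_mul]
  rw [h1, Matrix.mul_add, ← Matrix.mul_assoc, pascalL_mul_transpose, pascalL_mul_pascalHat]
  have h2 : (pascalQ F n + Matrix.diagonal (fun i => (x i)⁻¹)) * Matrix.diagonal x
      = pascalQ F n * Matrix.diagonal x + 1 := by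
    rw [Matrix.add_mul, Matrix.diagonal_mul_diagonal]
    congr 1
    rw [show (fun i => (x i)⁻¹ * x i) = fun _ => (1:F) from funext fun i => inv_mul_cancel₀ (hx i)]
    exact Matrix.diagonal_one
  rw [← h2, Matrix.det_mul, Matrix.det_diagonal, mul_comm]
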